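/- arXiv:2407.08364 — 3 statements merged into one kernel-verified Lean document; each statement's English description precedes it below -/
import Mathlib

section
/- Let f, f', g, g' : Fin n → ℝ and ε ≥ 0 satisfy |f(i) − f'(i)| ≤ ε and |g(i) − g'(i)| ≤ ε for all i. Then for every vertex v of the doubled graph G̃ one has |w̃_{f,g}(v) − w̃_{f',g'}(v)| ≤ ε, and for every edge e of G̃ one has |w̃_{f,g}(e) − w̃_{f',g'}(e)| ≤ ε; that is, under a sup-norm ε-perturbation of the pair of vertex functions, the filtration value of every vertex and every edge of the doubled graph changes by at most ε. -/
/-- Vertices of the doubled graph `G̃`: `A_i`, `A'_i` (for `i : Fin n`) and `O`. -/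
inductive DVert (n : ℕ) : Type
  | A : Fin n → DVert n
  | A' : Fin n → DVert n
  | O : DVert n

open DVert

/-- The relation generating the edges of the doubled graph `G̃`:
`A_iA_j` and `A'_iA'_j` for every edge `(i,j)` of `G`; `A_iA'_j` for every edge `(i,j)`
of `G` with `i < j`; and `O A_i` and `A_i A'_i` for every `i`. -/
def dRel {n : ℕ} (G : SimpleGraph (Fin n)) : DVert n → DVert n → Prop
  | .A i, .A j => G.Adj i j
  | .A' i, .A' j => G.Adj i j
  | .A i, .A' j => (G.Adj i j ∧ i < j) ∨ i = j
  | .O, .A _ => True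
  | _, _ => False

/-- The doubled graph `G̃`. -/
def doubled {n : ℕ} (G : SimpleGraph (Fin n)) : SimpleGraph (DVert n) :=
  SimpleGraph.fromRel (dRel G)

/-- `m₀ = min_i min (f i) (g i)`, the global minimum of `f` and `g`. -/
noncomputable def m0 {n : ℕ} (hn : 0 < n) (f g : Fin n → ℝ) : ℝ :=
  Finset.univ.inf' ⟨⟨0, hn⟩, Finset.mem_univ _⟩ (fun i => min (f i) (g i))

/-- The filtration value `w̃` on vertices of the doubled graph:
`w̃(A_i) = f i`, `w̃(A'_i) = min (f i) (g i)`, `w̃(O) = m₀`. -/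
noncomputable def wVert {n : ℕ} (hn : 0 < n) (f g : Fin n → ℝ) : DVert n → ℝ
  | .A i => f i
  | .A' i => min (f i) (g i)
  | .O => m0 hn f g

/-- The filtration value `w̃` on edges of the doubled graph, given by the two endpoints:
`w̃(A_iA_j) = max (f i) (f j)`, `w̃(A'_iA'_j) = min (max (f i) (f j)) (max (g i) (g j))`,
`w̃(A_iA'_j) = max (f i) (f j)` (so in particular `w̃(A_iA'_i) = f i`), `w̃(O A_i) = f i`. -/
noncomputable def wEdge {n : ℕ} (f g : Fin n → ℝ) : DVert n → DVert n → ℝ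
  | .A i, .A j => max (f i) (f j)
  | .A' i, .A' j => min (max (f i) (f j)) (max (g i) (g j))
  | .A i, .A' j => max (f i) (f j)
  | .A' i, .A j => max (f i) (f j)
  | .O, .A i => f i
  | .A i, .O => f i
  | _, _ => 0


private lemma absMax {a b c d e : ℝ} (h1 : |a - c| ≤ e) (h2 : |b - d| ≤ e) :
    |max a b - max c d| ≤ e :=
  (abs_max_sub_max_le_max a b c d).trans (max_le h1 h2)

private lemma absMin {a b c d e : ℝ} (h1 : |a - c| ≤ e) (h2 : |b - d| ≤ e) :
    |min a b - min c d| ≤ e :=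
  (abs_min_sub_min_le_max a b c d).trans (max_le h1 h2)

private lemma absInf {n : ℕ} (hn : 0 < n) (F F' : Fin n → ℝ) (e : ℝ)
    (h : ∀ i, |F i - F' i| ≤ e) :
    |Finset.univ.inf' ⟨⟨0, hn⟩, Finset.mem_univ _⟩ F -
      Finset.univ.inf' ⟨⟨0, hn⟩, Finset.mem_univ _⟩ F'| ≤ e := by
  rw [abs_sub_le_iff]
  constructor
  · rw [sub_le_iff_le_add]
    obtain ⟨i, _, hi⟩ := Finset.exists_mem_eq_inf' (⟨⟨0, hn⟩, Finset.mem_univ _⟩ :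
      (Finset.univ : Finset (Fin n)).Nonempty) F'
    rw [hi]
    calc Finset.univ.inf' _ F ≤ F i := Finset.inf'_le _ (Finset.mem_univ i)
      _ ≤ F' i + e := by have := (abs_sub_le_iff.mp (h i)).1; linarith
      _ = e + F' i := add_comm _ _
  · rw [sub_le_iff_le_add]
    obtain ⟨i, _, hi⟩ := Finset.exists_mem_eq_inf' (⟨⟨0, hn⟩, Finset.mem_univ _⟩ :
      (Finset.univ : Finset (Fin n)).Nonempty) F
    rw [hi]
    calc Finset.univ.inf' _ F' ≤ F' i := Finset.inf'_le _ (Finset.mem_univ i)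
      _ ≤ F i + e := by have := (abs_sub_le_iff.mp (h i)).2; linarith
      _ = e + F i := add_comm _ _

theorem wTilde_perturbation {n : ℕ} (hn : 0 < n) (G : SimpleGraph (Fin n))
    (f f' g g' : Fin n → ℝ) (ε : ℝ) (hε : 0 ≤ ε)
    (hf : ∀ i, |f i - f' i| ≤ ε) (hg : ∀ i, |g i - g' i| ≤ ε) :
    (∀ v : DVert n, |wVert hn f g v - wVert hn f' g' v| ≤ ε) ∧
    (∀ u v : DVert n, (doubled G).Adj u v →
      |wEdge f g u v - wEdge f' g' u v| ≤ ε) := by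
  constructor
  · intro v
    cases v with
    | A i => exact hf i
    | A' i => exact absMin (hf i) (hg i)
    | O => exact absInf hn _ _ ε (fun i => absMin (hf i) (hg i))
  · intro u v _
    cases u <;> cases v <;>
      simp only [wEdge] <;>
      first
        | exact absMin (absMax (hf _) (hf _)) (absMax (hg _) (hg _))
        | exact absMax (hf _) (hf _)
        | exact hf _
        | simpa using hε
end

section
/- If f = g (pointwise on Fin n), then for every ε ∈ ℝ the ε-sublevel subgraph of (G̃, w̃) is either empty or connected. -/
open DVert

theorem wEdge_comm {n : ℕ} (f g : Fin n → ℝ) (u v : DVert n) :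
    wEdge f g u v = wEdge f g v u := by
  cases u <;> cases v <;> simp [wEdge, max_comm, min_comm]

/-- The `ε`-sublevel subgraph of `(G̃, w̃)`: its vertices are the vertices `v` of `G̃`
with `w̃(v) ≤ ε`, and its edges are the edges `e` of `G̃` with `w̃(e) ≤ ε`. -/
def subl {n : ℕ} (hn : 0 < n) (G : SimpleGraph (Fin n))
    (f g : Fin n → ℝ) (ε : ℝ) :
    SimpleGraph {v : DVert n // wVert hn f g v ≤ ε} where
  Adj u v := (doubled G).Adj u.1 v.1 ∧ wEdge f g u.1 v.1 ≤ ε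
  symm := ⟨fun u v h => ⟨h.1.symm, by rw [wEdge_comm]; exact h.2⟩⟩
  loopless := ⟨fun u h => (doubled G).loopless.irrefl u.1 h.1⟩

theorem sublevel_empty_or_connected_of_eq {n : ℕ} (hn : 0 < n)
    (G : SimpleGraph (Fin n)) (f g : Fin n → ℝ) (hfg : f = g) (ε : ℝ) :
    IsEmpty {v : DVert n // wVert hn f g v ≤ ε} ∨ (subl hn G f g ε).Connected := by
  subst hfg
  by_cases he : IsEmpty {v : DVert n // wVert hn f f v ≤ ε}
  · exact Or.inl he
  · right
    rw [not_isEmpty_iff] at he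
    obtain ⟨⟨v, hv⟩⟩ := he
    have hlow : ∀ w : DVert n, m0 hn f f ≤ wVert hn f f w := by
      intro w
      cases w with
      | A i =>
        simp only [wVert, m0]
        exact Finset.inf'_le_of_le _ (Finset.mem_univ i) (min_le_left _ _)
      | A' i =>
        simp only [wVert, m0]
        exact Finset.inf'_le_of_le _ (Finset.mem_univ i) le_rfl
      | O => exact le_refl _
    have hm0 : wVert hn f f DVert.O ≤ ε := (hlow v).trans hv
    set Ov : {v : DVert n // wVert hn f f v ≤ ε} := ⟨DVert.O, hm0⟩ with hOv
    have hreach : ∀ u : {v : DVert n // wVert hn f f v ≤ ε},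
        (subl hn G f f ε).Reachable u Ov := by
      rintro ⟨u, hu⟩
      cases u with
      | A i =>
        refine SimpleGraph.Adj.reachable ?_
        refine ⟨?_, ?_⟩
        · simp [doubled, dRel, SimpleGraph.fromRel_adj, hOv]
        · simpa [wEdge, wVert, hOv] using hu
      | A' i =>
        have hfi : f i ≤ ε := by simpa [wVert, min_self] using hu
        have h1 : (subl hn G f f ε).Adj ⟨DVert.A' i, hu⟩ ⟨DVert.A i, by simpa [wVert] using hfi⟩ := by
          refine ⟨?_, ?_⟩
          · simp [doubled, dRel, SimpleGraph.fromRel_adj]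
          · simpa [wEdge] using hfi
        have h2 : (subl hn G f f ε).Adj ⟨DVert.A i, by simpa [wVert] using hfi⟩ Ov := by
          refine ⟨?_, ?_⟩
          · simp [doubled, dRel, SimpleGraph.fromRel_adj, hOv]
          · simpa [wEdge, hOv] using hfi
        exact (SimpleGraph.Adj.reachable h1).trans (SimpleGraph.Adj.reachable h2)
      | O => exact SimpleGraph.Reachable.refl _
    rw [SimpleGraph.connected_iff]
    exact ⟨fun a b => (hreach a).trans (hreach b).symm, ⟨Ov⟩⟩
end

section
/- Let f, f', g, g' : Fin n → ℝ and ε ≥ 0 satisfy |f(i) − f'(i)| ≤ ε and |g(i) − g'(i)| ≤ ε for all i. Then for every α ∈ ℝ, every vertex of the α-sublevel subgraph of (G̃, w̃_{f,g}) is a vertex of the (α + ε)-sublevel subgraph of (G̃, w̃_{f',g'}), and every edge of the former is an edge of the latter (an ε-interleaving of the two sublevel filtrations of the doubled graph). -/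
open DVert

theorem sublevel_interleaving {n : ℕ} (hn : 0 < n) (G : SimpleGraph (Fin n))
    (f f' g g' : Fin n → ℝ) (ε : ℝ) (hε : 0 ≤ ε)
    (hf : ∀ i, |f i - f' i| ≤ ε) (hg : ∀ i, |g i - g' i| ≤ ε) :
    ∀ α : ℝ,
      (∀ v : DVert n, wVert hn f g v ≤ α → wVert hn f' g' v ≤ α + ε) ∧
      (∀ u v : DVert n, (doubled G).Adj u v → wEdge f g u v ≤ α →
        wEdge f' g' u v ≤ α + ε) := by
  have hf' : ∀ i, f' i ≤ f i + ε := fun i => by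
    have := abs_le.mp (hf i); linarith [this.1]
  have hg' : ∀ i, g' i ≤ g i + ε := fun i => by
    have := abs_le.mp (hg i); linarith [this.1]
  intro α
  constructor
  · intro v hv
    cases v with
    | A i => simpa [wVert] using le_trans (hf' i) (by simpa [wVert] using add_le_add_right hv ε)
    | A' i =>
      simp only [wVert] at hv ⊢
      rcases le_total (f i) (g i) with h | h
      · exact le_trans (min_le_left _ _) (le_trans (hf' i) (by
          rw [min_eq_left h] at hv; linarith))
      · exact le_trans (min_le_right _ _) (le_trans (hg' i) (by
          rw [min_eq_right h] at hv; linarith))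
    | O =>
      simp only [wVert] at hv ⊢
      obtain ⟨i, -, hi⟩ := Finset.exists_mem_eq_inf' (s := (Finset.univ : Finset (Fin n)))
        ⟨⟨0, hn⟩, Finset.mem_univ _⟩ (fun i => min (f i) (g i))
      have h1 : m0 hn f' g' ≤ min (f' i) (g' i) :=
        Finset.inf'_le _ (Finset.mem_univ i)
      have h2 : min (f' i) (g' i) ≤ min (f i) (g i) + ε := by
        rcases le_total (f i) (g i) with h | h
        · exact le_trans (min_le_left _ _) (by
            rw [min_eq_left h]; exact hf' i)
        · exact le_trans (min_le_right _ _) (by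
            rw [min_eq_right h]; exact hg' i)
      have hm : m0 hn f g = min (f i) (g i) := hi
      calc m0 hn f' g' ≤ min (f i) (g i) + ε := le_trans h1 h2
        _ ≤ α + ε := by rw [← hm]; linarith
  · intro u v _ huv
    have key : ∀ i j : Fin n, max (f i) (f j) ≤ α → max (f' i) (f' j) ≤ α + ε := by
      intro i j h
      have := max_le_iff.mp h
      exact max_le (le_trans (hf' i) (by linarith [this.1]))
        (le_trans (hf' j) (by linarith [this.2]))
    have keyg : ∀ i j : Fin n, max (g i) (g j) ≤ α → max (g' i) (g' j) ≤ α + ε := by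
      intro i j h
      have := max_le_iff.mp h
      exact max_le (le_trans (hg' i) (by linarith [this.1]))
        (le_trans (hg' j) (by linarith [this.2]))
    cases u with
    | A i =>
      cases v with
      | A j => exact key i j huv
      | A' j => exact key i j huv
      | O => simp only [wEdge] at huv ⊢
             exact le_trans (hf' i) (by linarith)
    | A' i =>
      cases v with
      | A j => exact key i j huv
      | A' j =>
        simp only [wEdge] at huv ⊢
        rcases le_total (max (f i) (f j)) (max (g i) (g j)) with h | h
        · rw [min_eq_left h] at huv
          exact le_trans (min_le_left _ _) (key i j huv)
        · rw [min_eq_right h] at huv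
          exact le_trans (min_le_right _ _) (keyg i j huv)
      | O => simp only [wEdge] at huv ⊢; linarith
    | O =>
      cases v with
      | A i => simp only [wEdge] at huv ⊢
               exact le_trans (hf' i) (by linarith)
      | A' i => simp only [wEdge] at huv ⊢; linarith
      | O => simp only [wEdge] at huv ⊢; linarith
end
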